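/- arXiv:1805.01144 — 3 statements merged into one kernel-verified Lean document; each statement's English description precedes it below -/
import Mathlib

section
/- Let d ∈ ℕ, let τ₁ < τ₂ be real numbers, and let G : {(t,s) : τ₁ ≤ s ≤ t ≤ τ₂} → ℝ^{d×d} be bounded and measurable. Then for every essentially bounded measurable F : (τ₁,τ₂) → ℝ^d there exists a unique (up to equality almost everywhere) essentially bounded measurable U : (τ₁,τ₂) → ℝ^d satisfying the Volterra equation of the second kind U(t) = F(t) + ∫_{τ₁}^t G(t,s) U(s) ds for almost every t ∈ (τ₁,τ₂). -/
open MeasureTheory Set intervalIntegral Filter Nat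

set_option maxHeartbeats 1000000

lemma aux_mulVec_norm_le {d : ℕ} (A : Matrix (Fin d) (Fin d) ℝ) (v : Fin d → ℝ) {c : ℝ}
    (hc : 0 ≤ c) (h : ∀ i j, |A i j| ≤ c) : ‖A.mulVec v‖ ≤ (d * c) * ‖v‖ := by
  rw [pi_norm_le_iff_of_nonneg (by positivity)]
  intro i
  have : A.mulVec v i = ∑ j, A i j * v j := rfl
  rw [Real.norm_eq_abs, this]
  calc |∑ j, A i j * v j| ≤ ∑ j, |A i j * v j| := Finset.abs_sum_le_sum_abs _ _
    _ ≤ ∑ _j : Fin d, c * ‖v‖ := by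
        refine Finset.sum_le_sum fun j _ => ?_
        rw [abs_mul]
        have h2 : |v j| ≤ ‖v‖ := by
          simpa [Real.norm_eq_abs] using norm_le_pi_norm v j
        exact mul_le_mul (h i j) h2 (abs_nonneg _) hc
    _ = (d * c) * ‖v‖ := by simp [Finset.sum_const, mul_assoc]

noncomputable def vker {d : ℕ} (τ₁ τ₂ : ℝ) (G : ℝ → ℝ → Matrix (Fin d) (Fin d) ℝ)
    (V : ℝ → Fin d → ℝ) (t s : ℝ) : Fin d → ℝ :=
  if τ₁ < s ∧ s ≤ t ∧ t ≤ τ₂ then (G t s).mulVec (V s) else 0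

lemma vker_sub {d : ℕ} (τ₁ τ₂ : ℝ) (G : ℝ → ℝ → Matrix (Fin d) (Fin d) ℝ)
    (V W : ℝ → Fin d → ℝ) (t s : ℝ) :
    vker τ₁ τ₂ G V t s - vker τ₁ τ₂ G W t s = vker τ₁ τ₂ G (fun s => V s - W s) t s := by
  unfold vker
  split_ifs with h
  · exact (Matrix.mulVec_sub _ _ _).symm
  · simp

lemma vker_measurable {d : ℕ} (τ₁ τ₂ : ℝ) (G : ℝ → ℝ → Matrix (Fin d) (Fin d) ℝ)
    (hGmeas : ∀ i j, Measurable fun p : ℝ × ℝ => G p.1 p.2 i j)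
    (V : ℝ → Fin d → ℝ) (hV : Measurable V) :
    Measurable fun p : ℝ × ℝ => vker τ₁ τ₂ G V p.1 p.2 := by
  have hs : MeasurableSet {p : ℝ × ℝ | τ₁ < p.2 ∧ p.2 ≤ p.1 ∧ p.1 ≤ τ₂} := by
    refine (measurableSet_lt measurable_const measurable_snd).inter
      ((measurableSet_le measurable_snd measurable_fst).inter
        (measurableSet_le measurable_fst measurable_const))
  have hf : Measurable fun p : ℝ × ℝ => (G p.1 p.2).mulVec (V p.2) := by
    rw [measurable_pi_iff]
    intro i
    have : (fun p : ℝ × ℝ => (G p.1 p.2).mulVec (V p.2) i)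
        = fun p : ℝ × ℝ => ∑ j, G p.1 p.2 i j * V p.2 j := rfl
    rw [this]
    exact Finset.measurable_sum _ fun j _ =>
      (hGmeas i j).mul ((measurable_pi_apply j).comp (hV.comp measurable_snd))
  exact Measurable.ite hs hf measurable_const

lemma vint_measurable {d : ℕ} (τ₁ τ₂ : ℝ) (G : ℝ → ℝ → Matrix (Fin d) (Fin d) ℝ)
    (hGmeas : ∀ i j, Measurable fun p : ℝ × ℝ => G p.1 p.2 i j)
    (V : ℝ → Fin d → ℝ) (hV : Measurable V) :
    Measurable fun t => ∫ s, vker τ₁ τ₂ G V t s := by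
  have h := (vker_measurable τ₁ τ₂ G hGmeas V hV).stronglyMeasurable
  exact (MeasureTheory.StronglyMeasurable.integral_prod_right
    (f := fun t s => vker τ₁ τ₂ G V t s) h).measurable

lemma ae_ne_pt (a : ℝ) : ∀ᵐ s : ℝ, s ≠ a := by
  rw [ae_iff]
  simpa using measure_singleton (μ := (volume : Measure ℝ)) a

lemma vker_integrable {d : ℕ} (τ₁ τ₂ : ℝ) (G : ℝ → ℝ → Matrix (Fin d) (Fin d) ℝ)
    (hGmeas : ∀ i j, Measurable fun p : ℝ × ℝ => G p.1 p.2 i j)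
    (CG' : ℝ) (hCG' : 0 ≤ CG')
    (hGbdd : ∀ t s, τ₁ ≤ s → s ≤ t → t ≤ τ₂ → ∀ i j, |G t s i j| ≤ CG')
    (V : ℝ → Fin d → ℝ) (hV : Measurable V) (C : ℝ)
    (hVb : ∀ᵐ s ∂(volume.restrict (Set.Ioo τ₁ τ₂)), ‖V s‖ ≤ C) (t : ℝ) :
    Integrable (fun s => vker τ₁ τ₂ G V t s) volume := by
  have hC0 : 0 ≤ (d * CG') * max C 0 := by positivity
  refine Integrable.mono' (g := (Ioc τ₁ τ₂).indicator fun _ => (d * CG') * max C 0) ?_ ?_ ?_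
  · rw [integrable_indicator_iff measurableSet_Ioc]
    exact integrableOn_const measure_Ioc_lt_top.ne
  · exact ((vker_measurable τ₁ τ₂ G hGmeas V hV).comp (measurable_prodMk_left)).aestronglyMeasurable
  · rw [ae_restrict_iff' measurableSet_Ioo] at hVb
    filter_upwards [hVb, ae_ne_pt τ₂] with s hs hne
    unfold vker
    split_ifs with h
    · obtain ⟨h1, h2, h3⟩ := h
      have hs2 : s < τ₂ := lt_of_le_of_ne (h2.trans h3) hne
      have hmem : s ∈ Ioc τ₁ τ₂ := ⟨h1, hs2.le⟩
      rw [Set.indicator_of_mem hmem]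
      calc ‖(G t s).mulVec (V s)‖ ≤ (d * CG') * ‖V s‖ :=
            aux_mulVec_norm_le _ _ hCG' (hGbdd t s h1.le h2 h3)
        _ ≤ (d * CG') * max C 0 := by
            refine mul_le_mul_of_nonneg_left ?_ (by positivity)
            exact le_trans (hs ⟨h1, hs2⟩) (le_max_left _ _)
    · simpa using Set.indicator_nonneg (fun _ _ => hC0) s

lemma vker_key {d : ℕ} (τ₁ τ₂ : ℝ) (hτ : τ₁ < τ₂) (G : ℝ → ℝ → Matrix (Fin d) (Fin d) ℝ)
    (hGmeas : ∀ i j, Measurable fun p : ℝ × ℝ => G p.1 p.2 i j)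
    (CG' : ℝ) (hCG' : 0 ≤ CG')
    (hGbdd : ∀ t s, τ₁ ≤ s → s ≤ t → t ≤ τ₂ → ∀ i j, |G t s i j| ≤ CG')
    (V : ℝ → Fin d → ℝ) (hV : Measurable V) (A : ℝ) (hA : 0 ≤ A) (n : ℕ)
    (hVb : ∀ᵐ s ∂(volume.restrict (Set.Ioo τ₁ τ₂)), ‖V s‖ ≤ A * (s - τ₁) ^ n / n !)
    (t : ℝ) (ht1 : τ₁ ≤ t) (ht2 : t ≤ τ₂) :
    ‖∫ s, vker τ₁ τ₂ G V t s‖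
      ≤ (d * CG') * A * (t - τ₁) ^ (n + 1) / (n + 1)! := by
  have hfact : (0:ℝ) < n ! := by exact_mod_cast Nat.factorial_pos n
  -- constant bound on V for integrability
  have hVconst : ∀ᵐ s ∂(volume.restrict (Set.Ioo τ₁ τ₂)), ‖V s‖ ≤ A * (τ₂ - τ₁) ^ n / n ! := by
    rw [ae_restrict_iff' measurableSet_Ioo] at hVb ⊢
    filter_upwards [hVb] with s hs hmem
    refine (hs hmem).trans ?_
    have h1 : (0:ℝ) ≤ s - τ₁ := by linarith [hmem.1]
    have h2 : s - τ₁ ≤ τ₂ - τ₁ := by linarith [hmem.2]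
    gcongr
  have hint : Integrable (fun s => vker τ₁ τ₂ G V t s) volume :=
    vker_integrable τ₁ τ₂ G hGmeas CG' hCG' hGbdd V hV _ hVconst t
  -- dominating function
  set g : ℝ → ℝ := (Ioc τ₁ t).indicator (fun s => (d * CG') * (A * (s - τ₁) ^ n / n !)) with hg
  have hgcont : Continuous fun s : ℝ => (d * CG') * (A * (s - τ₁) ^ n / n !) := by continuity
  have hgint : Integrable g volume := by
    rw [hg, integrable_indicator_iff measurableSet_Ioc]
    exact hgcont.integrableOn_Ioc
  have hbound : ∀ᵐ s ∂(volume : Measure ℝ), ‖vker τ₁ τ₂ G V t s‖ ≤ g s := by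
    have hVb' := (ae_restrict_iff' measurableSet_Ioo).mp hVb
    filter_upwards [hVb', ae_ne_pt τ₂] with s hs hne
    unfold vker
    split_ifs with h
    · obtain ⟨h1, h2, h3⟩ := h
      have hs2 : s < τ₂ := lt_of_le_of_ne (h2.trans h3) hne
      have hmem : s ∈ Ioc τ₁ t := ⟨h1, h2⟩
      rw [hg, Set.indicator_of_mem hmem]
      calc ‖(G t s).mulVec (V s)‖ ≤ (d * CG') * ‖V s‖ :=
            aux_mulVec_norm_le _ _ hCG' (hGbdd t s h1.le h2 h3)
        _ ≤ (d * CG') * (A * (s - τ₁) ^ n / n !) :=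
            mul_le_mul_of_nonneg_left (hs ⟨h1, hs2⟩) (by positivity)
    · have : 0 ≤ g s := by
        refine Set.indicator_nonneg (fun x hx => ?_) s
        have : (0:ℝ) ≤ (x - τ₁) ^ n := pow_nonneg (by linarith [hx.1]) n
        positivity
      simpa using this
  calc ‖∫ s, vker τ₁ τ₂ G V t s‖ ≤ ∫ s, ‖vker τ₁ τ₂ G V t s‖ :=
        MeasureTheory.norm_integral_le_integral_norm _
    _ ≤ ∫ s, g s := integral_mono_ae hint.norm hgint hbound
    _ = ∫ s in Ioc τ₁ t, (d * CG') * (A * (s - τ₁) ^ n / n !) := by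
        rw [hg, MeasureTheory.integral_indicator measurableSet_Ioc]
    _ = ∫ s in τ₁..t, (d * CG') * (A * (s - τ₁) ^ n / n !) :=
        (intervalIntegral.integral_of_le ht1).symm
    _ = (d * CG') * (A / n !) * ∫ s in τ₁..t, (s - τ₁) ^ n := by
        rw [← intervalIntegral.integral_const_mul]
        congr 1; funext s; ring
    _ = (d * CG') * (A / n !) * ((t - τ₁) ^ (n + 1) / (n + 1)) := by
        rw [intervalIntegral.integral_comp_sub_right (fun x => x ^ n) τ₁]
        simp [integral_pow]
    _ = (d * CG') * A * (t - τ₁) ^ (n + 1) / (n + 1)! := by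
        rw [Nat.factorial_succ]
        push_cast
        field_simp
        try exact Or.inl trivial

lemma vker_eq_indicator {d : ℕ} (τ₁ τ₂ : ℝ) (G : ℝ → ℝ → Matrix (Fin d) (Fin d) ℝ)
    (V : ℝ → Fin d → ℝ) (t : ℝ) (ht2 : t ≤ τ₂) :
    (fun s => vker τ₁ τ₂ G V t s) = (Ioc τ₁ t).indicator (fun s => (G t s).mulVec (V s)) := by
  funext s
  unfold vker
  rw [Set.indicator_apply]
  by_cases h : s ∈ Ioc τ₁ t
  · rw [if_pos ⟨h.1, h.2, ht2⟩, if_pos h]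
  · rw [if_neg h, if_neg fun hc => h ⟨hc.1, hc.2.1⟩]

lemma vint_eq {d : ℕ} (τ₁ τ₂ : ℝ) (G : ℝ → ℝ → Matrix (Fin d) (Fin d) ℝ)
    (V : ℝ → Fin d → ℝ) (t : ℝ) (ht1 : τ₁ ≤ t) (ht2 : t ≤ τ₂) :
    ∫ s in τ₁..t, (G t s).mulVec (V s) = ∫ s, vker τ₁ τ₂ G V t s := by
  calc ∫ s in τ₁..t, (G t s).mulVec (V s)
      = ∫ s in Ioc τ₁ t, (G t s).mulVec (V s) := intervalIntegral.integral_of_le ht1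
    _ = ∫ s, (Ioc τ₁ t).indicator (fun s => (G t s).mulVec (V s)) s :=
        (MeasureTheory.integral_indicator measurableSet_Ioc).symm
    _ = ∫ s, vker τ₁ τ₂ G V t s := by
        refine integral_congr_ae (Eventually.of_forall fun s => ?_)
        exact (congrFun (vker_eq_indicator τ₁ τ₂ G V t ht2) s).symm

noncomputable def vseq {d : ℕ} (τ₁ τ₂ : ℝ) (G : ℝ → ℝ → Matrix (Fin d) (Fin d) ℝ)
    (F : ℝ → Fin d → ℝ) : ℕ → ℝ → Fin d → ℝ
  | 0 => F
  | n + 1 => fun t => F t + ∫ s, vker τ₁ τ₂ G (vseq τ₁ τ₂ G F n) t s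

/-- Existence and uniqueness (up to a.e. equality) of essentially bounded measurable
solutions of the Volterra equation of the second kind
`U(t) = F(t) + ∫_{τ₁}^t G(t,s) U(s) ds` on `(τ₁, τ₂)`. -/
theorem volterra_second_kind_exists_unique
    (d : ℕ) (τ₁ τ₂ : ℝ) (hτ : τ₁ < τ₂)
    (G : ℝ → ℝ → Matrix (Fin d) (Fin d) ℝ)
    (hGmeas : ∀ i j, Measurable fun p : ℝ × ℝ => G p.1 p.2 i j)
    (CG : ℝ)
    (hGbdd : ∀ t s, τ₁ ≤ s → s ≤ t → t ≤ τ₂ → ∀ i j, |G t s i j| ≤ CG)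
    (F : ℝ → Fin d → ℝ) (hFmeas : Measurable F)
    (CF : ℝ)
    (hFbdd : ∀ᵐ t ∂(volume.restrict (Set.Ioo τ₁ τ₂)), ‖F t‖ ≤ CF) :
    ∃ U : ℝ → Fin d → ℝ,
      (Measurable U ∧
        (∃ C : ℝ, ∀ᵐ t ∂(volume.restrict (Set.Ioo τ₁ τ₂)), ‖U t‖ ≤ C) ∧
        (∀ᵐ t ∂(volume.restrict (Set.Ioo τ₁ τ₂)),
          U t = F t + ∫ s in τ₁..t, (G t s).mulVec (U s))) ∧
      (∀ U' : ℝ → Fin d → ℝ,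
        Measurable U' →
        (∃ C : ℝ, ∀ᵐ t ∂(volume.restrict (Set.Ioo τ₁ τ₂)), ‖U' t‖ ≤ C) →
        (∀ᵐ t ∂(volume.restrict (Set.Ioo τ₁ τ₂)),
          U' t = F t + ∫ s in τ₁..t, (G t s).mulVec (U' s)) →
        U' =ᵐ[volume.restrict (Set.Ioo τ₁ τ₂)] U) := by
  classical
  obtain ⟨CG', hCG'def⟩ : ∃ x : ℝ, x = max CG 0 := ⟨_, rfl⟩
  have hCG' : (0:ℝ) ≤ CG' := by rw [hCG'def]; exact le_max_right _ _
  have hGbdd' : ∀ t s, τ₁ ≤ s → s ≤ t → t ≤ τ₂ → ∀ i j, |G t s i j| ≤ CG' :=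
    fun t s h1 h2 h3 i j => (hGbdd t s h1 h2 h3 i j).trans
      (by rw [hCG'def]; exact le_max_left _ _)
  obtain ⟨Kc, hKcdef⟩ : ∃ x : ℝ, x = d * CG' := ⟨_, rfl⟩
  have hKc : (0:ℝ) ≤ Kc := by rw [hKcdef]; positivity
  obtain ⟨CF', hCF'def⟩ : ∃ x : ℝ, x = max CF 0 := ⟨_, rfl⟩
  have hCF' : (0:ℝ) ≤ CF' := by rw [hCF'def]; exact le_max_right _ _
  have hFbdd' : ∀ᵐ t ∂(volume.restrict (Set.Ioo τ₁ τ₂)), ‖F t‖ ≤ CF' :=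
    hFbdd.mono fun t h => h.trans (by rw [hCF'def]; exact le_max_left _ _)
  obtain ⟨L, hLdef⟩ : ∃ x : ℝ, x = τ₂ - τ₁ := ⟨_, rfl⟩
  have hL : (0:ℝ) ≤ L := by rw [hLdef]; linarith
  obtain ⟨u, hudef⟩ : ∃ u : ℕ → ℝ, ∀ n, u n = CF' * ((Kc * L) ^ (n + 1) / (n + 1)!) :=
    ⟨_, fun _ => rfl⟩
  have hu0 : ∀ n, 0 ≤ u n := by
    intro n
    rw [hudef]
    have h1 : (0:ℝ) ≤ (Kc * L) ^ (n+1) := pow_nonneg (mul_nonneg hKc hL) _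
    have h2 : (0:ℝ) < ((n+1)! : ℝ) := by exact_mod_cast Nat.factorial_pos (n+1)
    exact mul_nonneg hCF' (div_nonneg h1 h2.le)
  have husum : Summable u := by
    have hw : Summable fun n : ℕ => CF' * ((Kc * L) ^ n / n !) :=
      (Real.summable_pow_div_factorial (Kc * L)).mul_left CF'
    have := (summable_nat_add_iff 1).mpr hw
    refine this.congr fun n => ?_
    rw [hudef]
  set S : ℕ → ℝ → Fin d → ℝ := vseq τ₁ τ₂ G F with hSdef
  have hSsucc : ∀ n t, S (n + 1) t = F t + ∫ s, vker τ₁ τ₂ G (S n) t s := fun n t => rfl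
  have hS0 : ∀ t, S 0 t = F t := fun t => rfl
  -- measurability of iterates
  have hSmeas : ∀ n, Measurable (S n) := by
    intro n
    induction n with
    | zero => exact hFmeas
    | succ n ih =>
      exact hFmeas.add (vint_measurable τ₁ τ₂ G hGmeas (S n) ih)
  -- uniform a.e. bounds on iterates
  have hSbd : ∀ n, ∃ C, 0 ≤ C ∧ ∀ᵐ t ∂(volume.restrict (Set.Ioo τ₁ τ₂)), ‖S n t‖ ≤ C := by
    intro n
    induction n with
    | zero => exact ⟨CF', hCF', hFbdd'⟩
    | succ n ih =>
      obtain ⟨C, hC0, hC⟩ := ih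
      refine ⟨CF' + Kc * C * L, by
        have := mul_nonneg (mul_nonneg hKc hC0) hL
        linarith, ?_⟩
      filter_upwards [hFbdd', ae_restrict_mem measurableSet_Ioo] with t hF ht
      rw [hSsucc]
      have hkey := vker_key τ₁ τ₂ hτ G hGmeas CG' hCG' hGbdd' (S n) (hSmeas n) C hC0 0
        (hC.mono fun s h => by simpa using h) t ht.1.le ht.2.le
      rw [← hKcdef] at hkey
      calc ‖F t + ∫ s, vker τ₁ τ₂ G (S n) t s‖
          ≤ ‖F t‖ + ‖∫ s, vker τ₁ τ₂ G (S n) t s‖ := norm_add_le _ _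
        _ ≤ CF' + Kc * C * L := by
            refine add_le_add hF (hkey.trans ?_)
            have h1 : (t - τ₁) ≤ L := by rw [hLdef]; linarith [ht.2]
            calc Kc * C * (t - τ₁) ^ (0+1) / (0+1)!
                = Kc * C * (t - τ₁) := by norm_num [Nat.factorial]
              _ ≤ Kc * C * L := mul_le_mul_of_nonneg_left h1 (mul_nonneg hKc hC0)
  -- difference bounds
  have hdiff : ∀ n, ∀ t, τ₁ ≤ t → t ≤ τ₂ →
      ‖S (n+1) t - S n t‖ ≤ CF' * Kc ^ (n+1) * (t - τ₁) ^ (n+1) / (n+1)! := by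
    intro n
    induction n with
    | zero =>
      intro t ht1 ht2
      have heq : S 1 t - S 0 t = ∫ s, vker τ₁ τ₂ G F t s := by
        rw [hSsucc, hS0]
        exact add_sub_cancel_left _ _
      rw [heq]
      have hkey := vker_key τ₁ τ₂ hτ G hGmeas CG' hCG' hGbdd' F hFmeas CF' hCF' 0
        (hFbdd'.mono fun s h => by simpa using h) t ht1 ht2
      rw [← hKcdef] at hkey
      refine hkey.trans (le_of_eq ?_)
      ring
    | succ n ih =>
      intro t ht1 ht2
      obtain ⟨Cn, hCn0, hCn⟩ := hSbd n
      obtain ⟨Cn1, hCn10, hCn1⟩ := hSbd (n+1)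
      have hint1 : Integrable (fun s => vker τ₁ τ₂ G (S (n+1)) t s) volume :=
        vker_integrable τ₁ τ₂ G hGmeas CG' hCG' hGbdd' (S (n+1)) (hSmeas (n+1)) Cn1 hCn1 t
      have hint0 : Integrable (fun s => vker τ₁ τ₂ G (S n) t s) volume :=
        vker_integrable τ₁ τ₂ G hGmeas CG' hCG' hGbdd' (S n) (hSmeas n) Cn hCn t
      have heq : S (n+2) t - S (n+1) t
          = ∫ s, vker τ₁ τ₂ G (fun s => S (n+1) s - S n s) t s := by
        rw [hSsucc, hSsucc, add_sub_add_left_eq_sub, ← integral_sub hint1 hint0]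
        refine integral_congr_ae (Eventually.of_forall fun s => ?_)
        exact vker_sub τ₁ τ₂ G _ _ t s
      rw [heq]
      have hVb : ∀ᵐ s ∂(volume.restrict (Set.Ioo τ₁ τ₂)),
          ‖S (n+1) s - S n s‖ ≤ (CF' * Kc ^ (n+1)) * (s - τ₁) ^ (n+1) / (n+1)! := by
        filter_upwards [ae_restrict_mem measurableSet_Ioo] with s hs
        exact (ih s hs.1.le hs.2.le).trans (le_of_eq (by ring))
      have hkey := vker_key τ₁ τ₂ hτ G hGmeas CG' hCG' hGbdd'
        (fun s => S (n+1) s - S n s) ((hSmeas (n+1)).sub (hSmeas n))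
        (CF' * Kc ^ (n+1)) (mul_nonneg hCF' (pow_nonneg hKc _)) (n+1) hVb t ht1 ht2
      rw [← hKcdef] at hkey
      refine hkey.trans (le_of_eq ?_)
      ring
  -- per-step bound by u
  have hdiffu : ∀ n t, τ₁ ≤ t → t ≤ τ₂ → ‖S (n+1) t - S n t‖ ≤ u n := by
    intro n t ht1 ht2
    refine (hdiff n t ht1 ht2).trans ?_
    have h1 : (t - τ₁) ≤ L := by rw [hLdef]; linarith
    have h2 : (0:ℝ) ≤ t - τ₁ := by linarith
    have h3 : (0:ℝ) < ((n+1)! : ℝ) := by exact_mod_cast Nat.factorial_pos (n+1)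
    have hp : (t - τ₁) ^ (n+1) ≤ L ^ (n+1) := pow_le_pow_left₀ h2 h1 _
    calc CF' * Kc ^ (n+1) * (t - τ₁) ^ (n+1) / (n+1)!
        ≤ CF' * Kc ^ (n+1) * L ^ (n+1) / (n+1)! := by
          exact div_le_div_of_nonneg_right
            (mul_le_mul_of_nonneg_left hp (mul_nonneg hCF' (pow_nonneg hKc _))) h3.le
      _ = u n := by rw [hudef, mul_pow]; ring
  -- telescoping
  have htel : ∀ n p t, τ₁ ≤ t → t ≤ τ₂ →
      ‖S (p + n) t - S n t‖ ≤ ∑ k ∈ Finset.range p, u (k + n) := by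
    intro n p t ht1 ht2
    induction p with
    | zero => simp
    | succ p ih =>
      have htri : ‖S (p + 1 + n) t - S n t‖
          ≤ ‖S (p + n + 1) t - S (p + n) t‖ + ‖S (p + n) t - S n t‖ := by
        have : p + 1 + n = p + n + 1 := by ring
        rw [this]
        exact norm_sub_le_norm_sub_add_norm_sub _ _ _
      refine htri.trans ?_
      rw [Finset.sum_range_succ]
      have := hdiffu (p + n) t ht1 ht2
      linarith [ih]
  -- Cauchy
  have hcauchy : ∀ t, CauchySeq fun n => S n t := by
    intro t
    by_cases ht : τ₁ ≤ t ∧ t ≤ τ₂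
    · refine cauchySeq_of_dist_le_of_summable u (fun n => ?_) husum
      rw [dist_eq_norm, norm_sub_rev]
      exact hdiffu n t ht.1 ht.2
    · have hconst : ∀ n, S n t = F t := by
        intro n
        induction n with
        | zero => rfl
        | succ n ihn =>
          rw [hSsucc]
          have hz : ∀ s, vker τ₁ τ₂ G (S n) t s = 0 := by
            intro s
            unfold vker
            rw [if_neg]
            rintro ⟨h1, h2, h3⟩
            exact ht ⟨h1.le.trans h2, h3⟩
          simp [hz]
      have : (fun n => S n t) = fun _ => F t := funext hconst
      rw [this]
      exact tendsto_const_nhds.cauchySeq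
  set U : ℝ → Fin d → ℝ := fun t => limUnder atTop fun n => S n t with hUdef
  have htend : ∀ t, Tendsto (fun n => S n t) atTop (nhds (U t)) :=
    fun t => (hcauchy t).tendsto_limUnder
  have hUmeas : Measurable U :=
    measurable_of_tendsto_metrizable hSmeas (tendsto_pi_nhds.mpr htend)
  -- tail bound
  have htail : ∀ n t, τ₁ ≤ t → t ≤ τ₂ → ‖U t - S n t‖ ≤ ∑' k, u (k + n) := by
    intro n t ht1 ht2
    have hsub : Summable fun k => u (k + n) := (summable_nat_add_iff n).mpr husum
    have hlim : Tendsto (fun p => ‖S (p + n) t - S n t‖) atTop (nhds ‖U t - S n t‖) := by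
      have h1 : Tendsto (fun p => S (p + n) t) atTop (nhds (U t)) :=
        (htend t).comp (tendsto_add_atTop_nat n)
      exact (h1.sub tendsto_const_nhds).norm
    refine le_of_tendsto hlim (Eventually.of_forall fun p => ?_)
    exact (htel n p t ht1 ht2).trans (Summable.sum_le_tsum (Finset.range p) (fun k _ => hu0 _) hsub)
  set C : ℝ := CF' + ∑' k, u k with hCdef
  have hUbd : ∀ᵐ t ∂(volume.restrict (Set.Ioo τ₁ τ₂)), ‖U t‖ ≤ C := by
    filter_upwards [hFbdd', ae_restrict_mem measurableSet_Ioo] with t hF ht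
    have h0 := htail 0 t ht.1.le ht.2.le
    have hUt : U t = F t + (U t - F t) := by abel
    calc ‖U t‖ = ‖F t + (U t - F t)‖ := by rw [← hUt]
      _ ≤ ‖F t‖ + ‖U t - F t‖ := norm_add_le _ _
      _ ≤ CF' + ∑' k, u k := by
          refine add_le_add hF ?_
          simpa [hS0] using h0
  -- the limit equation
  have heqU : ∀ t, τ₁ < t → t < τ₂ → U t = F t + ∫ s, vker τ₁ τ₂ G U t s := by
    intro t h1 h2
    have hIntU : Integrable (fun s => vker τ₁ τ₂ G U t s) volume :=
      vker_integrable τ₁ τ₂ G hGmeas CG' hCG' hGbdd' U hUmeas C hUbd t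
    have hconv : Tendsto (fun n => ∫ s, vker τ₁ τ₂ G (S n) t s) atTop
        (nhds (∫ s, vker τ₁ τ₂ G U t s)) := by
      rw [tendsto_iff_norm_sub_tendsto_zero]
      have hzero : Tendsto (fun n => Kc * (∑' k, u (k + n)) * L) atTop (nhds 0) := by
        have := (tendsto_sum_nat_add u).const_mul Kc
        have := this.mul_const L
        simpa using this
      refine squeeze_zero (fun n => norm_nonneg _) (fun n => ?_) hzero
      obtain ⟨Cn, hCn0, hCn⟩ := hSbd n
      have hIntn : Integrable (fun s => vker τ₁ τ₂ G (S n) t s) volume :=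
        vker_integrable τ₁ τ₂ G hGmeas CG' hCG' hGbdd' (S n) (hSmeas n) Cn hCn t
      have heq2 : (∫ s, vker τ₁ τ₂ G (S n) t s) - ∫ s, vker τ₁ τ₂ G U t s
          = ∫ s, vker τ₁ τ₂ G (fun s => S n s - U s) t s := by
        rw [← integral_sub hIntn hIntU]
        refine integral_congr_ae (Eventually.of_forall fun s => ?_)
        exact vker_sub τ₁ τ₂ G _ _ t s
      rw [heq2]
      set εn : ℝ := ∑' k, u (k + n) with hεdef
      have hε0 : 0 ≤ εn := tsum_nonneg fun k => hu0 _
      have hVb : ∀ᵐ s ∂(volume.restrict (Set.Ioo τ₁ τ₂)),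
          ‖S n s - U s‖ ≤ εn * (s - τ₁) ^ 0 / 0 ! := by
        filter_upwards [ae_restrict_mem measurableSet_Ioo] with s hs
        have := htail n s hs.1.le hs.2.le
        rw [norm_sub_rev] at this
        simpa using this
      have hkey := vker_key τ₁ τ₂ hτ G hGmeas CG' hCG' hGbdd'
        (fun s => S n s - U s) ((hSmeas n).sub hUmeas) εn hε0 0 hVb t h1.le h2.le
      rw [← hKcdef] at hkey
      refine hkey.trans ?_
      have ha : (t - τ₁) ≤ L := by rw [hLdef]; linarith
      calc Kc * εn * (t - τ₁) ^ (0+1) / (0+1)!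
          = Kc * εn * (t - τ₁) := by norm_num [Nat.factorial]
        _ ≤ Kc * εn * L := mul_le_mul_of_nonneg_left ha (mul_nonneg hKc hε0)
    have ht1 : Tendsto (fun n => S (n+1) t) atTop (nhds (U t)) :=
      (htend t).comp (tendsto_add_atTop_nat 1)
    have ht2 : Tendsto (fun n => S (n+1) t) atTop
        (nhds (F t + ∫ s, vker τ₁ τ₂ G U t s)) := by
      have : (fun n => S (n+1) t) = fun n => F t + ∫ s, vker τ₁ τ₂ G (S n) t s :=
        funext fun n => hSsucc n t
      rw [this]
      exact tendsto_const_nhds.add hconv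
    exact tendsto_nhds_unique ht1 ht2
  refine ⟨U, ⟨hUmeas, ⟨C, hUbd⟩, ?_⟩, ?_⟩
  · filter_upwards [ae_restrict_mem measurableSet_Ioo] with t ht
    rw [vint_eq τ₁ τ₂ G U t ht.1.le ht.2.le]
    exact heqU t ht.1 ht.2
  · rintro U' hU'meas ⟨C', hC'⟩ heq'
    set W : ℝ → Fin d → ℝ := fun s => U' s - U s with hWdef
    have hWmeas : Measurable W := hU'meas.sub hUmeas
    set B : ℝ := max (C' + C) 0 with hBdef
    have hB0 : (0:ℝ) ≤ B := le_max_right _ _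
    have hWbd : ∀ᵐ s ∂(volume.restrict (Set.Ioo τ₁ τ₂)), ‖W s‖ ≤ B := by
      filter_upwards [hC', hUbd] with s h1 h2
      refine (norm_sub_le _ _).trans ((add_le_add h1 h2).trans (le_max_left _ _))
    have hWeq : ∀ᵐ t ∂(volume.restrict (Set.Ioo τ₁ τ₂)),
        W t = ∫ s, vker τ₁ τ₂ G W t s := by
      filter_upwards [heq', ae_restrict_mem measurableSet_Ioo] with t h1 ht
      have hU't : U' t = F t + ∫ s, vker τ₁ τ₂ G U' t s := by
        rw [h1, vint_eq τ₁ τ₂ G U' t ht.1.le ht.2.le]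
      have hUt : U t = F t + ∫ s, vker τ₁ τ₂ G U t s := heqU t ht.1 ht.2
      have hIntU : Integrable (fun s => vker τ₁ τ₂ G U t s) volume :=
        vker_integrable τ₁ τ₂ G hGmeas CG' hCG' hGbdd' U hUmeas C hUbd t
      have hIntU' : Integrable (fun s => vker τ₁ τ₂ G U' t s) volume :=
        vker_integrable τ₁ τ₂ G hGmeas CG' hCG' hGbdd' U' hU'meas C' hC' t
      calc W t = U' t - U t := rfl
        _ = (∫ s, vker τ₁ τ₂ G U' t s) - ∫ s, vker τ₁ τ₂ G U t s := by
            rw [hU't, hUt, add_sub_add_left_eq_sub]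
        _ = ∫ s, vker τ₁ τ₂ G W t s := by
            rw [← integral_sub hIntU' hIntU]
            refine integral_congr_ae (Eventually.of_forall fun s => ?_)
            exact vker_sub τ₁ τ₂ G _ _ t s
    have hiter : ∀ n, ∀ᵐ t ∂(volume.restrict (Set.Ioo τ₁ τ₂)),
        ‖W t‖ ≤ B * Kc ^ n * (t - τ₁) ^ n / n ! := by
      intro n
      induction n with
      | zero =>
        filter_upwards [hWbd] with t h
        simpa using h
      | succ n ih =>
        have hVb : ∀ᵐ s ∂(volume.restrict (Set.Ioo τ₁ τ₂)),
            ‖W s‖ ≤ (B * Kc ^ n) * (s - τ₁) ^ n / n ! := by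
          filter_upwards [ih] with s h
          exact h.trans (le_of_eq (by ring))
        filter_upwards [hWeq, ae_restrict_mem measurableSet_Ioo] with t hWt ht
        rw [hWt]
        have hkey := vker_key τ₁ τ₂ hτ G hGmeas CG' hCG' hGbdd' W hWmeas
          (B * Kc ^ n) (mul_nonneg hB0 (pow_nonneg hKc _)) n hVb t ht.1.le ht.2.le
        rw [← hKcdef] at hkey
        exact hkey.trans (le_of_eq (by ring))
    have hall : ∀ᵐ t ∂(volume.restrict (Set.Ioo τ₁ τ₂)),
        ∀ n, ‖W t‖ ≤ B * Kc ^ n * (t - τ₁) ^ n / n ! := (ae_all_iff).mpr hiter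
    filter_upwards [hall, ae_restrict_mem measurableSet_Ioo] with t h ht
    have hlim : Tendsto (fun n : ℕ => B * ((Kc * L) ^ n / n !)) atTop (nhds 0) := by
      have := (FloorSemiring.tendsto_pow_div_factorial_atTop (Kc * L)).const_mul B
      simpa using this
    have h0 : ‖W t‖ ≤ 0 := by
      refine ge_of_tendsto hlim (Eventually.of_forall fun n => ?_)
      refine (h n).trans ?_
      have ha : (t - τ₁) ≤ L := by rw [hLdef]; linarith [ht.2]
      have hb : (0:ℝ) ≤ t - τ₁ := by linarith [ht.1]
      have hf : (0:ℝ) < (n ! : ℝ) := by exact_mod_cast Nat.factorial_pos n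
      have hp : (t - τ₁) ^ n ≤ L ^ n := pow_le_pow_left₀ hb ha _
      have hm : B * Kc ^ n * (t - τ₁) ^ n ≤ B * Kc ^ n * L ^ n :=
        mul_le_mul_of_nonneg_left hp (mul_nonneg hB0 (pow_nonneg hKc _))
      calc B * Kc ^ n * (t - τ₁) ^ n / n !
          ≤ B * Kc ^ n * L ^ n / n ! := div_le_div_of_nonneg_right hm hf.le
        _ = B * ((Kc * L) ^ n / n !) := by rw [mul_pow]; ring
    have hW0 : W t = 0 := norm_le_zero_iff.mp h0
    exact sub_eq_zero.mp hW0
end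

section
/- Let T > 0, let f, g : [0,T] → ℝ be continuously differentiable, and let V : [0,T] → ℝ be continuous and satisfy the mixed Volterra–Fredholm equation V(t) = ∫_0^t f(t−s) V(s) ds + ∫_t^T g(s−t) V(s) ds for all t ∈ [0,T]. If V(0) = 0, then V is continuously differentiable on [0,T] and its derivative satisfies, for every t ∈ [0,T], V′(t) = ∫_0^t f(t−s) V′(s) ds + ∫_t^T g(s−t) V′(s) ds − g(T−t) V(T). -/
open Set intervalIntegral

open MeasureTheory

lemma hasDerivAt_primitive0 {φ : ℝ → ℝ} (hφ : Continuous φ) (t : ℝ) :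
    HasDerivAt (fun x => ∫ s in (0:ℝ)..x, φ s) (φ t) t :=
  intervalIntegral.integral_hasDerivAt_right (hφ.intervalIntegrable _ _)
    (hφ.stronglyMeasurableAtFilter _ _) hφ.continuousAt

lemma tri_swap (F : ℝ → ℝ → ℝ) (hF : Continuous (Function.uncurry F)) {t : ℝ} (ht : 0 ≤ t) :
    (∫ s in (0:ℝ)..t, ∫ r in s..t, F r s) = ∫ r in (0:ℝ)..t, ∫ s in (0:ℝ)..r, F r s := by
  have hFsw : Continuous fun p : ℝ × ℝ => F p.2 p.1 := hF.comp continuous_swap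
  have hmeas : MeasurableSet {p : ℝ × ℝ | p.1 < p.2} :=
    (isOpen_lt continuous_fst continuous_snd).measurableSet
  set Φ : ℝ × ℝ → ℝ := {p : ℝ × ℝ | p.1 < p.2}.indicator (fun p => F p.2 p.1) with hΦdef
  have hΦmeas : Measurable Φ := hFsw.measurable.indicator hmeas
  obtain ⟨C, hC⟩ := (isCompact_Icc.prod isCompact_Icc).exists_bound_of_continuousOn
    (hFsw.continuousOn : ContinuousOn (fun p : ℝ × ℝ => F p.2 p.1) (Icc 0 t ×ˢ Icc 0 t))
  have hint : Integrable Φ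
      ((volume.restrict (Ioc (0:ℝ) t)).prod (volume.restrict (Ioc (0:ℝ) t))) := by
    rw [Measure.prod_restrict]
    apply Measure.integrableOn_of_bounded (M := max C 0)
    · rw [Measure.prod_prod]
      exact ENNReal.mul_ne_top measure_Ioc_lt_top.ne measure_Ioc_lt_top.ne
    · exact hΦmeas.aestronglyMeasurable
    · refine (ae_restrict_mem (measurableSet_Ioc.prod measurableSet_Ioc)).mono fun p hp => ?_
      by_cases h : p ∈ {q : ℝ × ℝ | q.1 < q.2}
      · rw [hΦdef, Set.indicator_of_mem h]
        exact le_max_of_le_left (hC p ⟨Ioc_subset_Icc_self hp.1, Ioc_subset_Icc_self hp.2⟩)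
      · rw [hΦdef, Set.indicator_of_notMem h]
        simp
  have swap := MeasureTheory.integral_integral_swap (μ := volume.restrict (Ioc (0:ℝ) t))
    (ν := volume.restrict (Ioc (0:ℝ) t)) (f := fun s r => Φ (s, r)) hint
  have hL : (∫ s in (0:ℝ)..t, ∫ r in s..t, F r s)
      = ∫ s in Ioc (0:ℝ) t, ∫ r in Ioc (0:ℝ) t, Φ (s, r) := by
    rw [intervalIntegral.integral_of_le ht]
    refine setIntegral_congr_fun measurableSet_Ioc fun s hs => ?_
    have h1 : (fun r => Φ (s, r)) = (Ioi s).indicator (fun r => F r s) := by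
      funext r
      by_cases h : s < r <;> simp [hΦdef, Set.indicator, h]
    rw [h1, setIntegral_indicator measurableSet_Ioi, Ioc_inter_Ioi,
      max_eq_right hs.1.le, intervalIntegral.integral_of_le hs.2]
  have hR : (∫ r in (0:ℝ)..t, ∫ s in (0:ℝ)..r, F r s)
      = ∫ r in Ioc (0:ℝ) t, ∫ s in Ioc (0:ℝ) t, Φ (s, r) := by
    rw [intervalIntegral.integral_of_le ht]
    refine setIntegral_congr_fun measurableSet_Ioc fun r hr => ?_
    have h1 : (fun s => Φ (s, r)) = (Iio r).indicator (fun s => F r s) := by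
      funext s
      by_cases h : s < r <;> simp [hΦdef, Set.indicator, h]
    have h2 : Ioc (0:ℝ) t ∩ Iio r = Ioo 0 r := by
      ext x
      simp only [mem_inter_iff, mem_Ioc, mem_Iio, mem_Ioo]
      exact ⟨fun h => ⟨h.1.1, h.2⟩, fun h => ⟨⟨h.1, h.2.le.trans hr.2⟩, h.2⟩⟩
    rw [h1, setIntegral_indicator measurableSet_Iio, h2,
      intervalIntegral.integral_of_le hr.1.le, integral_Ioc_eq_integral_Ioo]
  rw [hL, hR]
  exact swap

lemma vol_eq (k' v : ℝ → ℝ) (hk' : Continuous k') (hv : Continuous v) (c : ℝ) {a : ℝ}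
    (ha : 0 ≤ a) :
    (∫ s in (0:ℝ)..a, (c + ∫ y in (0:ℝ)..(a - s), k' y) * v s)
      = c * (∫ s in (0:ℝ)..a, v s)
        + ∫ r in (0:ℝ)..a, ∫ s in (0:ℝ)..r, k' (r - s) * v s := by
  have hK : Continuous fun x => ∫ y in (0:ℝ)..x, k' y :=
    intervalIntegral.continuous_primitive (fun a b => hk'.intervalIntegrable a b) 0
  have h1 : (∫ s in (0:ℝ)..a, (c + ∫ y in (0:ℝ)..(a - s), k' y) * v s)
      = (∫ s in (0:ℝ)..a, c * v s)
        + ∫ s in (0:ℝ)..a, (∫ y in (0:ℝ)..(a - s), k' y) * v s := by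
    rw [← intervalIntegral.integral_add]
    · congr 1; funext s; ring
    · exact (continuous_const.mul hv).intervalIntegrable _ _
    · exact ((hK.comp (continuous_const.sub continuous_id)).mul hv).intervalIntegrable _ _
  have h2 : (∫ s in (0:ℝ)..a, (∫ y in (0:ℝ)..(a - s), k' y) * v s)
      = ∫ s in (0:ℝ)..a, ∫ r in s..a, k' (r - s) * v s := by
    refine intervalIntegral.integral_congr fun s hs => ?_
    rw [show (∫ r in s..a, k' (r - s) * v s) = (∫ r in s..a, k' (r - s)) * v s from
      intervalIntegral.integral_mul_const _ _]
    congr 1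
    rw [intervalIntegral.integral_comp_sub_right k' s, sub_self]
  rw [h1, h2, intervalIntegral.integral_const_mul,
    tri_swap (fun r s => k' (r - s) * v s)
      (((hk'.comp (continuous_fst.sub continuous_snd)).mul (hv.comp continuous_snd)) :) ha]

/-- A continuous solution `V` of the mixed Volterra–Fredholm equation
`V(t) = ∫_0^t f(t-s) V(s) ds + ∫_t^T g(s-t) V(s) ds` with `C¹` kernels `f, g`
and `V(0) = 0` is `C¹` on `[0,T]`, with derivative satisfying
`V'(t) = ∫_0^t f(t-s) V'(s) ds + ∫_t^T g(s-t) V'(s) ds - g(T-t) V(T)`. -/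
theorem mixed_volterra_fredholm_deriv_eq
    (T : ℝ) (hT : 0 < T) (f g f' g' V : ℝ → ℝ)
    (hf : ∀ t ∈ Set.Icc 0 T, HasDerivWithinAt f (f' t) (Set.Icc 0 T) t)
    (hf' : ContinuousOn f' (Set.Icc 0 T))
    (hg : ∀ t ∈ Set.Icc 0 T, HasDerivWithinAt g (g' t) (Set.Icc 0 T) t)
    (hg' : ContinuousOn g' (Set.Icc 0 T))
    (hV : ContinuousOn V (Set.Icc 0 T))
    (heq : ∀ t ∈ Set.Icc 0 T,
      V t = (∫ s in (0:ℝ)..t, f (t - s) * V s) + ∫ s in t..T, g (s - t) * V s)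
    (hV0 : V 0 = 0) :
    ∃ V' : ℝ → ℝ, ContinuousOn V' (Set.Icc 0 T) ∧
      (∀ t ∈ Set.Icc 0 T, HasDerivWithinAt V (V' t) (Set.Icc 0 T) t) ∧
      (∀ t ∈ Set.Icc 0 T,
        V' t = (∫ s in (0:ℝ)..t, f (t - s) * V' s)
          + (∫ s in t..T, g (s - t) * V' s) - g (T - t) * V T) := by
  have h0T : (0:ℝ) ≤ T := hT.le
  set u : ℝ → ℝ := Set.IccExtend h0T ((Set.Icc 0 T).restrict V) with hu_def
  have hu : Continuous u := hV.restrict.Icc_extend'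
  have hu_eq : ∀ x ∈ Set.Icc 0 T, u x = V x := fun x hx => by
    rw [hu_def, Set.IccExtend_of_mem h0T _ hx]; rfl
  set p : ℝ → ℝ := Set.IccExtend h0T ((Set.Icc 0 T).restrict f') with hp_def
  have hp : Continuous p := hf'.restrict.Icc_extend'
  have hp_eq : ∀ x ∈ Set.Icc 0 T, p x = f' x := fun x hx => by
    rw [hp_def, Set.IccExtend_of_mem h0T _ hx]; rfl
  set q : ℝ → ℝ := Set.IccExtend h0T ((Set.Icc 0 T).restrict g') with hq_def
  have hq : Continuous q := hg'.restrict.Icc_extend'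
  have hq_eq : ∀ x ∈ Set.Icc 0 T, q x = g' x := fun x hx => by
    rw [hq_def, Set.IccExtend_of_mem h0T _ hx]; rfl
  set ke : ℝ → ℝ := fun x => f 0 + ∫ y in (0:ℝ)..x, p y with hke_def
  set ge : ℝ → ℝ := fun x => g 0 + ∫ y in (0:ℝ)..x, q y with hge_def
  have hfc : ContinuousOn f (Set.Icc 0 T) := fun x hx => (hf x hx).continuousWithinAt
  have hgc : ContinuousOn g (Set.Icc 0 T) := fun x hx => (hg x hx).continuousWithinAt
  have hke_eq : ∀ x ∈ Set.Icc 0 T, ke x = f x := by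
    intro x hx
    have hx0 : (0:ℝ) ≤ x := hx.1
    have h1 : (∫ y in (0:ℝ)..x, p y) = ∫ y in (0:ℝ)..x, f' y :=
      intervalIntegral.integral_congr fun y hy => hp_eq y (by
        rw [Set.uIcc_of_le hx0] at hy; exact ⟨hy.1, hy.2.trans hx.2⟩)
    have h2 : (∫ y in (0:ℝ)..x, f' y) = f x - f 0 := by
      apply intervalIntegral.integral_eq_sub_of_hasDeriv_right_of_le hx0
      · exact hfc.mono (Set.Icc_subset_Icc le_rfl hx.2)
      · intro y hy
        exact ((hf y ⟨hy.1.le, (hy.2.trans_le hx.2).le⟩).hasDerivAt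
          (Icc_mem_nhds hy.1 (hy.2.trans_le hx.2))).hasDerivWithinAt
      · exact ContinuousOn.intervalIntegrable
          (by rw [Set.uIcc_of_le hx0]; exact hf'.mono (Set.Icc_subset_Icc le_rfl hx.2))
    rw [hke_def]; simp only []; rw [h1, h2]; ring
  have hge_eq : ∀ x ∈ Set.Icc 0 T, ge x = g x := by
    intro x hx
    have hx0 : (0:ℝ) ≤ x := hx.1
    have h1 : (∫ y in (0:ℝ)..x, q y) = ∫ y in (0:ℝ)..x, g' y :=
      intervalIntegral.integral_congr fun y hy => hq_eq y (by
        rw [Set.uIcc_of_le hx0] at hy; exact ⟨hy.1, hy.2.trans hx.2⟩)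
    have h2 : (∫ y in (0:ℝ)..x, g' y) = g x - g 0 := by
      apply intervalIntegral.integral_eq_sub_of_hasDeriv_right_of_le hx0
      · exact hgc.mono (Set.Icc_subset_Icc le_rfl hx.2)
      · intro y hy
        exact ((hg y ⟨hy.1.le, (hy.2.trans_le hx.2).le⟩).hasDerivAt
          (Icc_mem_nhds hy.1 (hy.2.trans_le hx.2))).hasDerivWithinAt
      · exact ContinuousOn.intervalIntegrable
          (by rw [Set.uIcc_of_le hx0]; exact hg'.mono (Set.Icc_subset_Icc le_rfl hx.2))
    rw [hge_def]; simp only []; rw [h1, h2]; ring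
  have hke_deriv : ∀ x : ℝ, HasDerivAt ke (p x) x := fun x => by
    rw [hke_def]; exact (hasDerivAt_primitive0 hp x).const_add (f 0)
  have hge_deriv : ∀ x : ℝ, HasDerivAt ge (q x) x := fun x => by
    rw [hge_def]; exact (hasDerivAt_primitive0 hq x).const_add (g 0)
  set ut : ℝ → ℝ := fun w => u (T - w) with hut_def
  have hut : Continuous ut := hu.comp (continuous_const.sub continuous_id)
  set B : ℝ → ℝ := fun r => ∫ s in (0:ℝ)..r, p (r - s) * u s with hB_def
  set Bg : ℝ → ℝ := fun r => ∫ s in (0:ℝ)..r, q (r - s) * ut s with hBg_def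
  have hB : Continuous B := by
    rw [hB_def]
    exact intervalIntegral.continuous_parametric_intervalIntegral_of_continuous
      (f := fun r s => p (r - s) * u s)
      ((hp.comp (continuous_fst.sub continuous_snd)).mul (hu.comp continuous_snd))
      continuous_id
  have hBg : Continuous Bg := by
    rw [hBg_def]
    exact intervalIntegral.continuous_parametric_intervalIntegral_of_continuous
      (f := fun r s => q (r - s) * ut s)
      ((hq.comp (continuous_fst.sub continuous_snd)).mul (hut.comp continuous_snd))
      continuous_id
  set W : ℝ → ℝ := fun t => f 0 * u t + B t - g 0 * u t - Bg (T - t) with hW_def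
  have hW : Continuous W := by
    rw [hW_def]
    exact (((continuous_const.mul hu).add hB).sub (continuous_const.mul hu)).sub
      (hBg.comp (continuous_const.sub continuous_id))
  set Aa : ℝ → ℝ := fun t => f 0 * (∫ s in (0:ℝ)..t, u s) + ∫ r in (0:ℝ)..t, B r with hAa_def
  set Gg : ℝ → ℝ :=
    fun t => g 0 * (∫ s in (0:ℝ)..(T - t), ut s) + ∫ r in (0:ℝ)..(T - t), Bg r with hGg_def
  have hVeq : ∀ t ∈ Set.Icc 0 T, V t = Aa t + Gg t := by
    intro t ht
    have h1 : (∫ s in (0:ℝ)..t, f (t - s) * V s) = ∫ s in (0:ℝ)..t, ke (t - s) * u s := by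
      refine intervalIntegral.integral_congr fun s hs => ?_
      rw [Set.uIcc_of_le ht.1] at hs
      have hts : t - s ∈ Set.Icc 0 T := ⟨by linarith [hs.2], by linarith [hs.1, ht.2]⟩
      rw [hke_eq _ hts, hu_eq _ ⟨hs.1, hs.2.trans ht.2⟩]
    have h2 : (∫ s in t..T, g (s - t) * V s) = ∫ s in t..T, ge (s - t) * u s := by
      refine intervalIntegral.integral_congr fun s hs => ?_
      rw [Set.uIcc_of_le ht.2] at hs
      have hst : s - t ∈ Set.Icc 0 T := ⟨by linarith [hs.1], by linarith [hs.2, ht.1]⟩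
      rw [hge_eq _ hst, hu_eq _ ⟨ht.1.trans hs.1, hs.2⟩]
    have h3 : (∫ s in t..T, ge (s - t) * u s)
        = ∫ w in (0:ℝ)..(T - t), ge ((T - t) - w) * ut w := by
      have hcs := intervalIntegral.integral_comp_sub_left (a := (0:ℝ)) (b := T - t)
        (fun s => ge (s - t) * u s) T
      rw [show T - (T - t) = t by ring, sub_zero] at hcs
      rw [← hcs]
      refine intervalIntegral.integral_congr fun w hw => ?_
      rw [hut_def]
      simp only []
      rw [show T - t - w = T - w - t by ring]
    have h4 : (∫ s in (0:ℝ)..t, ke (t - s) * u s)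
        = f 0 * (∫ s in (0:ℝ)..t, u s) + ∫ r in (0:ℝ)..t, B r := by
      rw [hke_def, hB_def]
      exact vol_eq p u hp hu (f 0) ht.1
    have h5 : (∫ w in (0:ℝ)..(T - t), ge ((T - t) - w) * ut w)
        = g 0 * (∫ s in (0:ℝ)..(T - t), ut s) + ∫ r in (0:ℝ)..(T - t), Bg r := by
      rw [hge_def, hBg_def]
      exact vol_eq q ut hq hut (g 0) (by linarith [ht.2])
    rw [heq t ht, h1, h2, h3, h4, h5, hAa_def, hGg_def]
  have hAG : ∀ t : ℝ, HasDerivAt (fun x => Aa x + Gg x) (W t) t := by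
    intro t
    have hA : HasDerivAt Aa (f 0 * u t + B t) t := by
      rw [hAa_def]
      exact ((hasDerivAt_primitive0 hu t).const_mul (f 0)).add (hasDerivAt_primitive0 hB t)
    have hP : ∀ a : ℝ, HasDerivAt
        (fun a => g 0 * (∫ s in (0:ℝ)..a, ut s) + ∫ r in (0:ℝ)..a, Bg r)
        (g 0 * ut a + Bg a) a := fun a =>
      ((hasDerivAt_primitive0 hut a).const_mul (g 0)).add (hasDerivAt_primitive0 hBg a)
    have hG : HasDerivAt Gg ((g 0 * ut (T - t) + Bg (T - t)) * (-1)) t := by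
      rw [hGg_def]
      exact (hP (T - t)).comp t ((hasDerivAt_id t).const_sub T)
    have hsum := hA.add hG
    have hval : W t = f 0 * u t + B t + (g 0 * ut (T - t) + Bg (T - t)) * (-1) := by
      simp only [hW_def, hut_def, show T - (T - t) = t by ring]
      ring
    rw [hval]
    exact hsum
  have hDW : ∀ t ∈ Set.Icc 0 T, HasDerivWithinAt V (W t) (Set.Icc 0 T) t := fun t ht =>
    ((hAG t).hasDerivWithinAt).congr (fun x hx => hVeq x hx) (hVeq t ht)
  set Vext : ℝ → ℝ := fun x => ∫ s in (0:ℝ)..x, W s with hVext_def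
  have hVext_deriv : ∀ x : ℝ, HasDerivAt Vext (W x) x := fun x => by
    rw [hVext_def]; exact hasDerivAt_primitive0 hW x
  have hVext_eq : ∀ x ∈ Set.Icc 0 T, Vext x = V x := by
    intro x hx
    have hsub : (∫ s in (0:ℝ)..x, W s) = V x - V 0 := by
      apply intervalIntegral.integral_eq_sub_of_hasDeriv_right_of_le hx.1
      · exact hV.mono (Set.Icc_subset_Icc le_rfl hx.2)
      · intro y hy
        exact ((hDW y ⟨hy.1.le, (hy.2.trans_le hx.2).le⟩).hasDerivAt
          (Icc_mem_nhds hy.1 (hy.2.trans_le hx.2))).hasDerivWithinAt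
      · exact hW.intervalIntegrable _ _
    rw [hVext_def]; simp only []; rw [hsub, hV0, sub_zero]
  refine ⟨W, hW.continuousOn, hDW, ?_⟩
  intro t ht
  have hke0 : ke 0 = f 0 := by rw [hke_def]; simp
  have hge0 : ge 0 = g 0 := by rw [hge_def]; simp
  have hVext0 : Vext 0 = 0 := by rw [hVext_def]; simp
  have e1 : (∫ s in (0:ℝ)..t, f (t - s) * W s) = f 0 * V t + B t := by
    have c1 : (∫ s in (0:ℝ)..t, f (t - s) * W s) = ∫ s in (0:ℝ)..t, ke (t - s) * W s := by
      refine intervalIntegral.integral_congr fun s hs => ?_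
      rw [Set.uIcc_of_le ht.1] at hs
      rw [hke_eq _ ⟨by linarith [hs.2], by linarith [hs.1, ht.2]⟩]
    have parts1 := intervalIntegral.integral_mul_deriv_eq_deriv_mul
      (a := (0:ℝ)) (b := t)
      (u := fun s => ke (t - s)) (u' := fun s => p (t - s) * (-1)) (v := Vext) (v' := W)
      (fun x _ => (hke_deriv (t - x)).comp x ((hasDerivAt_id x).const_sub t))
      (fun x _ => hVext_deriv x)
      (((hp.comp (continuous_const.sub continuous_id)).mul continuous_const).intervalIntegrable 0 t)
      (hW.intervalIntegrable 0 t)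
    have c2 : (∫ x in (0:ℝ)..t, (p (t - x) * (-1)) * Vext x) = - B t := by
      rw [hB_def, ← intervalIntegral.integral_neg]
      refine intervalIntegral.integral_congr fun s hs => ?_
      rw [Set.uIcc_of_le ht.1] at hs
      have hsI : s ∈ Set.Icc 0 T := ⟨hs.1, hs.2.trans ht.2⟩
      rw [hVext_eq s hsI, ← hu_eq s hsI]
      ring
    rw [c1, parts1, c2]
    simp only [sub_self, sub_zero, hke0, hVext0, mul_zero, hVext_eq t ht, sub_neg_eq_add]
  have e2 : (∫ s in t..T, g (s - t) * W s) = g (T - t) * V T - g 0 * V t - Bg (T - t) := by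
    have c1 : (∫ s in t..T, g (s - t) * W s) = ∫ s in t..T, ge (s - t) * W s := by
      refine intervalIntegral.integral_congr fun s hs => ?_
      rw [Set.uIcc_of_le ht.2] at hs
      rw [hge_eq _ ⟨by linarith [hs.1], by linarith [hs.2, ht.1]⟩]
    have parts2 := intervalIntegral.integral_mul_deriv_eq_deriv_mul
      (a := t) (b := T)
      (u := fun s => ge (s - t)) (u' := fun s => q (s - t) * 1) (v := Vext) (v' := W)
      (fun x _ => by
        have h := (hge_deriv (x - t)).comp x ((hasDerivAt_id x).sub_const t); exact h)
      (fun x _ => hVext_deriv x)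
      (((hq.comp (continuous_id.sub continuous_const)).mul continuous_const).intervalIntegrable t T)
      (hW.intervalIntegrable t T)
    have c2 : (∫ x in t..T, (q (x - t) * 1) * Vext x) = Bg (T - t) := by
      rw [hBg_def]
      simp only []
      have hcs := intervalIntegral.integral_comp_sub_left (a := (0:ℝ)) (b := T - t)
        (fun s => (q (s - t) * 1) * Vext s) T
      rw [show T - (T - t) = t by ring, sub_zero] at hcs
      rw [← hcs]
      refine intervalIntegral.integral_congr fun w hw => ?_
      rw [Set.uIcc_of_le (by linarith [ht.2] : (0:ℝ) ≤ T - t)] at hw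
      have hTw : T - w ∈ Set.Icc 0 T := ⟨by linarith [hw.2, ht.1], by linarith [hw.1]⟩
      rw [hVext_eq _ hTw, ← hu_eq _ hTw, hut_def]
      simp only []
      rw [show T - w - t = T - t - w by ring]
      ring
    have hTt : T - t ∈ Set.Icc 0 T := ⟨by linarith [ht.2], by linarith [ht.1]⟩
    rw [c1, parts2, c2]
    simp only [sub_self, hge0, hge_eq _ hTt, hVext_eq T ⟨h0T, le_rfl⟩, hVext_eq t ht]
  rw [e1, e2, hW_def]
  simp only []
  rw [hu_eq t ht]
  ring
end

section
/- Let c ≥ 1 be a real number and let (a_n)_{n≥0} and (b_n)_{n≥0} be sequences of nonnegative real numbers such that a_0 ≤ 1, b_k ≤ c^k · k! for every k ≥ 0, and a_{n+1} ≤ Σ_{k=0}^{n} a_{n−k} b_k for every n ≥ 0. Then a_n ≤ c^n · n! for every n ≥ 0. -/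
/-- If `a 0 ≤ 1`, `b k ≤ c^k k!` and `a (n+1) ≤ ∑_{k=0}^{n} a (n-k) b k` for nonnegative
sequences `a`, `b` and a real `c ≥ 1`, then `a n ≤ c^n n!` for all `n`. -/
theorem recurrence_factorial_bound
    (c : ℝ) (hc : 1 ≤ c) (a b : ℕ → ℝ)
    (ha : ∀ n, 0 ≤ a n) (hb : ∀ n, 0 ≤ b n)
    (ha0 : a 0 ≤ 1)
    (hbk : ∀ k, b k ≤ c ^ k * (Nat.factorial k : ℝ))
    (hrec : ∀ n, a (n + 1) ≤ ∑ k ∈ Finset.range (n + 1), a (n - k) * b k) :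
    ∀ n, a n ≤ c ^ n * (Nat.factorial n : ℝ) := by
  have hc0 : (0:ℝ) ≤ c := le_trans zero_le_one hc
  intro n
  induction n using Nat.strong_induction_on with
  | _ n ih =>
    match n with
    | 0 => simpa using ha0
    | Nat.succ m =>
      have step : ∀ k ∈ Finset.range (m + 1),
          a (m - k) * b k ≤ c ^ m * (Nat.factorial m : ℝ) := by
        intro k hk
        have hkm : k ≤ m := Nat.lt_succ_iff.mp (Finset.mem_range.mp hk)
        have h1 : a (m - k) * b k ≤
            (c ^ (m - k) * (Nat.factorial (m - k) : ℝ)) * (c ^ k * (Nat.factorial k : ℝ)) := by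
          apply mul_le_mul (ih (m - k) (by omega)) (hbk k) (hb k)
          positivity
        have h2 : (c ^ (m - k) * (Nat.factorial (m - k) : ℝ)) * (c ^ k * (Nat.factorial k : ℝ))
            = c ^ m * ((Nat.factorial k * Nat.factorial (m - k) : ℕ) : ℝ) := by
          push_cast
          rw [mul_mul_mul_comm, ← pow_add, Nat.sub_add_cancel hkm]
          ring
        have h3 : (Nat.factorial k * Nat.factorial (m - k)) ≤ Nat.factorial m :=
          Nat.le_of_dvd (Nat.factorial_pos m) (Nat.factorial_mul_factorial_dvd_factorial hkm)
        calc a (m - k) * b k ≤ _ := h1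
          _ = c ^ m * ((Nat.factorial k * Nat.factorial (m - k) : ℕ) : ℝ) := h2
          _ ≤ c ^ m * (Nat.factorial m : ℝ) := by
              apply mul_le_mul_of_nonneg_left _ (by positivity)
              exact_mod_cast h3
      calc a (m + 1) ≤ ∑ k ∈ Finset.range (m + 1), a (m - k) * b k := hrec m
        _ ≤ ∑ k ∈ Finset.range (m + 1), c ^ m * (Nat.factorial m : ℝ) :=
            Finset.sum_le_sum step
        _ = (m + 1 : ℝ) * (c ^ m * (Nat.factorial m : ℝ)) := by
            rw [Finset.sum_const, Finset.card_range]; push_cast; ring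
        _ ≤ c ^ (m + 1) * (Nat.factorial (m + 1) : ℝ) := by
            rw [Nat.factorial_succ]
            push_cast
            have hpow : c ^ m ≤ c ^ (m + 1) := pow_le_pow_right₀ hc (Nat.le_succ m)
            have h := mul_le_mul_of_nonneg_right hpow
              (show (0:ℝ) ≤ (↑m + 1) * ↑(Nat.factorial m) by positivity)
            nlinarith [h]
end
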